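/- arXiv:math/0508321 — 2 statements merged into one kernel-verified Lean document; each statement's English description precedes it below -/
import Mathlib

section
/- Let G be a finitely generated group and let H be a subgroup of G of finite index. If H has uniformly exponential growth, then G has uniformly exponential growth. -/
open Filter Pointwise Topology

variable {G : Type*} [Group G]

noncomputable def wordLength (S : Set G) (g : G) : ℕ :=
  sInf {k | ∃ w : List G, w.length = k ∧ (∀ x ∈ w, x ∈ S ∨ x⁻¹ ∈ S) ∧ w.prod = g}

noncomputable def ballCard (S : Set G) (n : ℕ) : ℕ :=
  Set.ncard {g : G | wordLength S g ≤ n}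

noncomputable def growthRate (S : Set G) : ℝ :=
  limUnder atTop (fun n : ℕ => (ballCard S n : ℝ) ^ ((n : ℝ)⁻¹))

noncomputable def minGrowth (G : Type*) [Group G] : ℝ :=
  sInf {x : ℝ | ∃ S : Finset G, Subgroup.closure (S : Set G) = ⊤ ∧ growthRate (S : Set G) = x}

namespace UEGAux

variable {K : Type*} [Group K] {S : Set K}

/-- The ball of radius `n`. -/
def ball (S : Set K) (n : ℕ) : Set K := {g : K | wordLength S g ≤ n}

lemma ballCard_eq (S : Set K) (n : ℕ) : ballCard S n = (ball S n).ncard := rfl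

lemma wordLength_le {g : K} {w : List K} (hw : ∀ x ∈ w, x ∈ S ∨ x⁻¹ ∈ S)
    (hp : w.prod = g) : wordLength S g ≤ w.length :=
  Nat.sInf_le ⟨w, rfl, hw, hp⟩

lemma exists_word (hS : Subgroup.closure S = ⊤) (g : K) :
    ∃ w : List K, (∀ x ∈ w, x ∈ S ∨ x⁻¹ ∈ S) ∧ w.prod = g ∧ w.length = wordLength S g := by
  have hg : g ∈ Subgroup.closure S := hS ▸ Subgroup.mem_top g
  have hg' : g ∈ (Subgroup.closure S).toSubmonoid := hg
  rw [Subgroup.closure_toSubmonoid] at hg'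
  obtain ⟨l, hl, hp⟩ := Submonoid.exists_list_of_mem_closure hg'
  have hl' : ∀ x ∈ l, x ∈ S ∨ x⁻¹ ∈ S := by
    intro x hx
    rcases hl x hx with h | h
    · exact Or.inl h
    · exact Or.inr (Set.mem_inv.mp h)
  have hne : {k | ∃ w : List K, w.length = k ∧ (∀ x ∈ w, x ∈ S ∨ x⁻¹ ∈ S) ∧ w.prod = g}.Nonempty :=
    ⟨l.length, l, rfl, hl', hp⟩
  obtain ⟨w, hw1, hw2, hw3⟩ := Nat.sInf_mem hne
  exact ⟨w, hw2, hw3, hw1⟩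

lemma wordLength_one : wordLength S (1 : K) = 0 :=
  Nat.le_zero.mp (wordLength_le (w := []) (by simp) rfl)

lemma one_mem_ball (n : ℕ) : (1 : K) ∈ ball S n := by
  simp [ball, wordLength_one]

lemma wordLength_mul_le (hS : Subgroup.closure S = ⊤) (g g' : K) :
    wordLength S (g * g') ≤ wordLength S g + wordLength S g' := by
  obtain ⟨w, hw, hp, hl⟩ := exists_word hS g
  obtain ⟨w', hw', hp', hl'⟩ := exists_word hS g'
  have := wordLength_le (S := S) (g := g * g') (w := w ++ w')
    (by intro x hx; rcases List.mem_append.mp hx with h | h; exacts [hw x h, hw' x h])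
    (by rw [List.prod_append, hp, hp'])
  simpa [hl, hl'] using this

lemma wordLength_inv_le (hS : Subgroup.closure S = ⊤) (g : K) :
    wordLength S g⁻¹ ≤ wordLength S g := by
  obtain ⟨w, hw, hp, hl⟩ := exists_word hS g
  have := wordLength_le (S := S) (g := g⁻¹) (w := (w.map fun x => x⁻¹).reverse)
    (by
      intro x hx
      rw [List.mem_reverse, List.mem_map] at hx
      obtain ⟨y, hy, rfl⟩ := hx
      rcases hw y hy with h | h
      · exact Or.inr (by simpa using h)
      · exact Or.inl h)
    (by rw [← List.prod_inv_reverse, hp])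
  simpa [hl] using this

lemma wordLength_le_of_mem {s : K} (h : s ∈ S ∨ s⁻¹ ∈ S) : wordLength S s ≤ 1 :=
  wordLength_le (w := [s]) (by simpa using h) (by simp)

lemma ball_mul (hS : Subgroup.closure S = ⊤) (m n : ℕ) :
    ball S (m + n) ⊆ ball S m * ball S n := by
  intro g hg
  obtain ⟨w, hw, hp, hl⟩ := exists_word hS g
  have hlen : w.length ≤ m + n := hl ▸ hg
  refine ⟨(w.take m).prod, ?_, (w.drop m).prod, ?_, by
    show (w.take m).prod * (w.drop m).prod = g
    rw [← List.prod_append, List.take_append_drop, hp]⟩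
  · have := wordLength_le (S := S) (w := w.take m)
      (fun x hx => hw x (List.take_subset _ _ hx)) rfl
    exact le_trans this (by simp)
  · have := wordLength_le (S := S) (w := w.drop m)
      (fun x hx => hw x (List.drop_subset _ _ hx)) rfl
    refine le_trans this ?_
    rw [List.length_drop]
    omega

lemma ball_finite (hS : Subgroup.closure S = ⊤) (hfin : S.Finite) (n : ℕ) :
    (ball S n).Finite := by
  induction n with
  | zero =>
    refine Set.Finite.subset (Set.finite_singleton 1) ?_
    intro g hg
    obtain ⟨w, _, hp, hl⟩ := exists_word hS g
    have : w.length = 0 := by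
      have : wordLength S g = 0 := Nat.le_zero.mp hg
      omega
    rw [List.length_eq_zero_iff] at this
    simp [this] at hp
    simp [← hp]
  | succ n ih =>
    have h1 : (ball S 1).Finite := by
      refine Set.Finite.subset (((hfin.union hfin.inv).insert 1)) ?_
      intro g hg
      obtain ⟨w, hw, hp, hl⟩ := exists_word hS g
      have : w.length ≤ 1 := hl ▸ hg
      match w, this with
      | [], _ => simp at hp; simp [← hp]
      | [x], _ =>
        simp at hp
        rcases hw x (by simp) with h | h
        · exact Set.mem_insert_iff.mpr (Or.inr (Set.mem_union_left _ (hp ▸ h)))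
        · exact Set.mem_insert_iff.mpr (Or.inr (Set.mem_union_right _ (by simp [← hp, h])))
    exact Set.Finite.subset (ih.mul h1) (ball_mul hS n 1)

lemma one_le_ballCard (hS : Subgroup.closure S = ⊤) (hfin : S.Finite) (n : ℕ) :
    1 ≤ ballCard S n := by
  rw [ballCard_eq]
  exact (Set.ncard_pos (ball_finite hS hfin n)).mpr ⟨1, one_mem_ball n⟩

lemma ballCard_submul (hS : Subgroup.closure S = ⊤) (hfin : S.Finite) (m n : ℕ) :
    ballCard S (m + n) ≤ ballCard S m * ballCard S n := by
  rw [ballCard_eq, ballCard_eq, ballCard_eq]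
  calc (ball S (m + n)).ncard ≤ (ball S m * ball S n).ncard :=
        Set.ncard_le_ncard (ball_mul hS m n) ((ball_finite hS hfin m).mul (ball_finite hS hfin n))
    _ ≤ (ball S m).ncard * (ball S n).ncard := by
        rw [← Nat.card_coe_set_eq, ← Nat.card_coe_set_eq, ← Nat.card_coe_set_eq]
        exact Set.natCard_mul_le

/-- Fekete: the growth sequence converges, the limit is `growthRate`, and it is `≥ 1`. -/
lemma growth_exists (T : Finset K) (hS : Subgroup.closure (T : Set K) = ⊤) :
    Tendsto (fun n : ℕ => (ballCard (T : Set K) n : ℝ) ^ ((n : ℝ)⁻¹)) atTop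
      (𝓝 (growthRate (T : Set K))) ∧ 1 ≤ growthRate (T : Set K) := by
  set S : Set K := (T : Set K) with hSdef
  have hfin : S.Finite := T.finite_toSet
  have hpos : ∀ n, (0 : ℝ) < (ballCard S n : ℝ) := fun n => by
    exact_mod_cast Nat.lt_of_lt_of_le Nat.zero_lt_one (one_le_ballCard hS hfin n)
  set u : ℕ → ℝ := fun n => Real.log (ballCard S n) with hu
  have hsub : Subadditive u := by
    intro m n
    have h1 : (ballCard S (m + n) : ℝ) ≤ (ballCard S m : ℝ) * ballCard S n := by
      exact_mod_cast ballCard_submul hS hfin m n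
    calc u (m + n) ≤ Real.log ((ballCard S m : ℝ) * ballCard S n) :=
          Real.log_le_log (hpos _) h1
      _ = u m + u n := Real.log_mul (ne_of_gt (hpos m)) (ne_of_gt (hpos n))
  have hunn : ∀ n, 0 ≤ u n := fun n =>
    Real.log_nonneg (by exact_mod_cast one_le_ballCard hS hfin n)
  have hbdd : BddBelow (Set.range fun n : ℕ => u n / n) := by
    refine ⟨0, ?_⟩
    rintro x ⟨n, rfl⟩
    exact div_nonneg (hunn n) (Nat.cast_nonneg n)
  have htend := hsub.tendsto_lim hbdd
  have htend2 : Tendsto (fun n : ℕ => Real.exp (u n / n)) atTop (𝓝 (Real.exp hsub.lim)) :=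
    (Real.continuous_exp.tendsto _).comp htend
  have heq : (fun n : ℕ => (ballCard S n : ℝ) ^ ((n : ℝ)⁻¹)) =
      fun n : ℕ => Real.exp (u n / n) := by
    funext n
    rcases Nat.eq_zero_or_pos n with rfl | hn
    · simp
    · rw [Real.rpow_def_of_pos (hpos n), div_eq_mul_inv]
  have hg : growthRate S = Real.exp hsub.lim := by
    apply Filter.Tendsto.limUnder_eq
    rw [heq]
    exact htend2
  constructor
  · rw [hg, heq]
    exact htend2
  · rw [hg]
    exact ge_of_tendsto' htend2 fun n =>
      Real.one_le_exp (div_nonneg (hunn n) (Nat.cast_nonneg n))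

section Schreier

variable {H : Subgroup K}

lemma short_rep (hH : H.FiniteIndex) (hS : Subgroup.closure S = ⊤) (g : K) :
    ∃ r : K, g * r⁻¹ ∈ H ∧
      wordLength S r ≤ Nat.card (Quotient (QuotientGroup.rightRel H)) := by
  classical
  haveI := hH
  haveI hQfin : Finite (Quotient (QuotientGroup.rightRel H)) :=
    Finite.of_equiv _ (QuotientGroup.quotientRightRelEquivQuotientLeftRel H).symm
  set k := Nat.card (Quotient (QuotientGroup.rightRel H)) with hk
  set qm : K → Quotient (QuotientGroup.rightRel H) := fun x => Quotient.mk _ x with hqm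
  set A : ℕ → Set (Quotient (QuotientGroup.rightRel H)) := fun n => qm '' (ball S n) with hA
  have hmono : ∀ {m n : ℕ}, m ≤ n → A m ⊆ A n := by
    intro m n hmn
    apply Set.image_mono
    intro x hx
    exact le_trans hx hmn
  have hstep : ∀ n, A n = A (n + 1) → A (n + 1) = A (n + 2) := by
    intro n hn
    refine le_antisymm (hmono (by omega)) ?_
    rintro q ⟨g, hg, rfl⟩
    obtain ⟨w, hw, hp, hl⟩ := exists_word hS g
    have hg' : wordLength S g ≤ n + 2 := hg
    have hlen : w.length ≤ n + 2 := by omega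
    rcases Nat.lt_or_ge w.length (n + 2) with hlt | hge
    · exact hmono (le_refl (n + 1))
        (hmono (le_refl (n+1)) ⟨g, by show wordLength S g ≤ n + 1; omega, rfl⟩)
    · rcases List.eq_nil_or_concat w with rfl | ⟨u, s, rfl⟩
      · simp at hge
      · rw [List.length_concat] at hlen
        have hu : u.prod ∈ ball S (n + 1) := by
          have := wordLength_le (S := S)
            (w := u) (fun x hx => hw x (by simp [List.concat_eq_append, hx])) rfl
          show wordLength S u.prod ≤ n + 1
          omega
        have hmem : qm u.prod ∈ A n := hn ▸ ⟨u.prod, hu, rfl⟩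
        obtain ⟨y, hy, hyq⟩ := hmem
        have hy' : wordLength S y ≤ n := hy
        have hrel : u.prod * y⁻¹ ∈ H := QuotientGroup.rightRel_apply.mp (Quotient.exact hyq)
        refine ⟨y * s, ?_, ?_⟩
        · show wordLength S (y * s) ≤ n + 1
          have h1 := wordLength_mul_le hS y s
          have h2 : wordLength S s ≤ 1 := wordLength_le_of_mem (hw s (by simp))
          omega
        · apply Quotient.sound
          apply QuotientGroup.rightRel_apply.mpr
          have hg2 : g = u.prod * s := by rw [← hp, List.prod_concat]
          rw [hg2]
          have he : u.prod * s * (y * s)⁻¹ = u.prod * y⁻¹ := by group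
          rw [he]
          exact hrel
  have hcard : ∀ n, A n = Set.univ ∨ n + 1 ≤ (A n).ncard := by
    intro n
    induction n with
    | zero =>
      right
      have hne : (A 0).Nonempty := ⟨qm 1, 1, one_mem_ball 0, rfl⟩
      have := (Set.ncard_pos (Set.toFinite _)).mpr hne
      omega
    | succ n ih =>
      rcases ih with hun | hcn
      · left
        exact Set.eq_univ_of_univ_subset (hun ▸ hmono (Nat.le_succ n))
      · by_cases hu : A (n + 1) = Set.univ
        · left; exact hu
        · right
          have hne : A n ≠ A (n + 1) := by
            intro heq
            apply hu
            have hstab : ∀ j, A (n + j) = A n ∧ A (n + j) = A (n + j + 1) := by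
              intro j
              induction j with
              | zero => exact ⟨rfl, heq⟩
              | succ j ihj =>
                exact ⟨ihj.2.symm.trans ihj.1, hstep (n + j) ihj.2⟩
            apply Set.eq_univ_of_forall
            intro q
            obtain ⟨g, rfl⟩ := Quotient.exists_rep q
            have hg : qm g ∈ A (wordLength S g) :=
              ⟨g, show wordLength S g ≤ wordLength S g from le_refl _, rfl⟩
            rcases le_or_gt (wordLength S g) (n + 1) with hle | hlt
            · exact hmono hle hg
            · have h1 : A (n + (wordLength S g - n)) = A n :=
                (hstab (wordLength S g - n)).1
              rw [Nat.add_sub_cancel' (by omega)] at h1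
              exact hmono (Nat.le_succ n) (h1 ▸ hg)
          have hss : A n ⊂ A (n + 1) := (hmono (Nat.le_succ n)).ssubset_of_ne hne
          have := Set.ncard_lt_ncard hss (Set.toFinite _)
          omega
  have hAk : A k = Set.univ := by
    rcases hcard k with hres | hres
    · exact hres
    · exfalso
      have h1 : (A k).ncard ≤ k := by
        have := Set.ncard_le_ncard (Set.subset_univ (A k)) (Set.toFinite _)
        rwa [Set.ncard_univ] at this
      omega
  have : qm g ∈ A k := hAk ▸ Set.mem_univ _
  obtain ⟨r, hr, hrq⟩ := this
  exact ⟨r, QuotientGroup.rightRel_apply.mp (Quotient.exact hrq), hr⟩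

lemma schreier_gen (hH : H.FiniteIndex) (hS : Subgroup.closure S = ⊤) :
    ∀ h ∈ H, h ∈ Subgroup.closure
      {x : K | x ∈ H ∧
        wordLength S x ≤ 2 * Nat.card (Quotient (QuotientGroup.rightRel H)) + 1} := by
  classical
  set k := Nat.card (Quotient (QuotientGroup.rightRel H)) with hk
  set qm : K → Quotient (QuotientGroup.rightRel H) := fun x => Quotient.mk _ x with hqm
  have hex : ∀ q : Quotient (QuotientGroup.rightRel H), ∃ r : K, qm r = q ∧ wordLength S r ≤ k := by
    intro q
    obtain ⟨g, rfl⟩ := Quotient.exists_rep q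
    obtain ⟨r, hr1, hr2⟩ := short_rep hH hS g
    exact ⟨r, Quotient.sound (QuotientGroup.rightRel_apply.mpr hr1), hr2⟩
  set rep0 : Quotient (QuotientGroup.rightRel H) → K := fun q => Classical.choose (hex q)
    with hrep0
  set rep : K → K := fun g => if qm g = qm 1 then 1 else rep0 (qm g) with hrep
  have hrep_len : ∀ g, wordLength S (rep g) ≤ k := by
    intro g
    by_cases hc : qm g = qm 1
    · simp only [hrep, hc, if_pos]
      rw [wordLength_one]
      exact Nat.zero_le k
    · simp only [hrep, if_neg hc]
      exact (Classical.choose_spec (hex (qm g))).2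
  have hrep_coset : ∀ g, g * (rep g)⁻¹ ∈ H := by
    intro g
    by_cases hc : qm g = qm 1
    · simp only [hrep, hc, if_pos, inv_one, mul_one]
      have h1 := QuotientGroup.rightRel_apply.mp (Quotient.exact hc)
      simpa using H.inv_mem h1
    · simp only [hrep, if_neg hc]
      exact QuotientGroup.rightRel_apply.mp
        (Quotient.exact (Classical.choose_spec (hex (qm g))).1)
  have hrep_one : ∀ h ∈ H, rep h = 1 := by
    intro h hh
    have hq : qm h = qm 1 := Quotient.sound (QuotientGroup.rightRel_apply.mpr (by simpa using hh))
    simp only [hrep, hq, if_pos]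
  set T : Set K := {x : K | x ∈ H ∧ wordLength S x ≤ 2 * k + 1} with hT
  have tele : ∀ (w : List K), (∀ x ∈ w, x ∈ S ∨ x⁻¹ ∈ S) → ∀ g : K,
      rep g * w.prod * (rep (g * w.prod))⁻¹ ∈ Subgroup.closure T := by
    intro w
    induction w with
    | nil =>
      intro _ g
      simp only [List.prod_nil, mul_one]
      rw [mul_inv_cancel]
      exact Subgroup.one_mem _
    | cons s t ih =>
      intro hw g
      have hs := hw s (by simp)
      have hkey : rep g * s * (rep (g * s))⁻¹ ∈ T := by
        constructor
        · have h1 : g * (rep g)⁻¹ ∈ H := hrep_coset g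
          have h2 : g * s * (rep (g * s))⁻¹ ∈ H := hrep_coset (g * s)
          have he : rep g * s * (rep (g * s))⁻¹ =
              (g * (rep g)⁻¹)⁻¹ * (g * s * (rep (g * s))⁻¹) := by group
          rw [he]
          exact H.mul_mem (H.inv_mem h1) h2
        · have l0 := wordLength_mul_le hS (rep g * s) (rep (g * s))⁻¹
          have l1 := wordLength_mul_le hS (rep g) s
          have l2 : wordLength S s ≤ 1 := wordLength_le_of_mem hs
          have l3 : wordLength S (rep (g * s))⁻¹ ≤ k :=
            le_trans (wordLength_inv_le hS _) (hrep_len _)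
          have l4 := hrep_len g
          show wordLength S (rep g * s * (rep (g * s))⁻¹) ≤ 2 * k + 1
          omega
      have hrec := ih (fun x hx => hw x (by simp [hx])) (g * s)
      have hsplit : rep g * (s :: t).prod * (rep (g * (s :: t).prod))⁻¹ =
          (rep g * s * (rep (g * s))⁻¹) *
            (rep (g * s) * t.prod * (rep (g * s * t.prod))⁻¹) := by
        rw [List.prod_cons, ← mul_assoc g s t.prod]
        group
      rw [hsplit]
      exact Subgroup.mul_mem _ (Subgroup.subset_closure hkey) hrec
  intro h hh
  obtain ⟨w, hw, hp, _⟩ := exists_word hS h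
  have hfinal := tele w hw 1
  rwa [hrep_one 1 H.one_mem, one_mul, hp, hrep_one h hh, inv_one, mul_one] at hfinal

lemma wordLength_prod_le (hS : Subgroup.closure S = ⊤) (d : ℕ)
    {w : List K} (hw : ∀ x ∈ w, wordLength S x ≤ d) :
    wordLength S w.prod ≤ d * w.length := by
  induction w with
  | nil => simp [wordLength_one]
  | cons x t ih =>
    rw [List.prod_cons]
    calc wordLength S (x * t.prod) ≤ wordLength S x + wordLength S t.prod :=
          wordLength_mul_le hS x t.prod
      _ ≤ d + d * t.length :=
          Nat.add_le_add (hw x (by simp)) (ih fun y hy => hw y (by simp [hy]))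
      _ = d * (x :: t).length := by rw [List.length_cons, Nat.mul_succ, Nat.add_comm]

end Schreier

end UEGAux

/-- a finitely generated group with a finite-index subgroup of uniformly
exponential growth has uniformly exponential growth. -/
theorem uniform_growth_of_finiteIndex_subgroup {G : Type*} [Group G]
    (hG : Group.FG G) (H : Subgroup G) (hH : H.FiniteIndex)
    (h : 1 < minGrowth H) : 1 < minGrowth G := by
  classical
  set k := Nat.card (Quotient (QuotientGroup.rightRel H)) with hk
  set d := 2 * k + 1 with hd
  set c := minGrowth H with hc
  have hc0 : (0 : ℝ) < c := lt_trans one_pos h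
  have hdpos : (0 : ℝ) < (d : ℝ) := by exact_mod_cast Nat.succ_pos (2 * k)
  have hlbH : ∀ y ∈ {x : ℝ | ∃ S : Finset H, Subgroup.closure (S : Set H) = ⊤ ∧
      growthRate (S : Set H) = x}, (1 : ℝ) ≤ y := by
    rintro y ⟨T, hT, rfl⟩
    exact (UEGAux.growth_exists T hT).2
  have key : ∀ x ∈ {x : ℝ | ∃ S : Finset G, Subgroup.closure (S : Set G) = ⊤ ∧
      growthRate (S : Set G) = x}, c ^ ((d : ℝ))⁻¹ ≤ x := by
    rintro x ⟨S, hS, rfl⟩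
    have hfin : (S : Set G).Finite := S.finite_toSet
    have hTfin : {x : H | wordLength (S : Set G) (x : G) ≤ d}.Finite := by
      have hinj : Set.InjOn (fun x : H => (x : G))
          {x : H | wordLength (S : Set G) (x : G) ≤ d} :=
        fun a _ b _ hab => Subtype.ext hab
      apply Set.Finite.of_finite_image ?_ hinj
      apply Set.Finite.subset (UEGAux.ball_finite hS hfin d)
      rintro _ ⟨a, ha, rfl⟩
      exact ha
    set T : Finset H := hTfin.toFinset with hTdef
    have hTcoe : (T : Set H) = {x : H | wordLength (S : Set G) (x : G) ≤ d} :=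
      Set.Finite.coe_toFinset _
    have hTgen : Subgroup.closure (T : Set H) = ⊤ := by
      rw [hTcoe, eq_top_iff]
      intro hh _
      have h1 := UEGAux.schreier_gen hH hS (hh : G) hh.2
      have h2 : Subgroup.closure {x : G | x ∈ H ∧ wordLength (S : Set G) x ≤ d} ≤
          Subgroup.map H.subtype
            (Subgroup.closure {x : H | wordLength (S : Set G) (x : G) ≤ d}) := by
        rw [Subgroup.closure_le]
        rintro x ⟨hxH, hxl⟩
        exact ⟨⟨x, hxH⟩, Subgroup.subset_closure hxl, rfl⟩
      obtain ⟨y, hy, hyx⟩ := h2 h1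
      have hyh : y = hh := Subtype.ext hyx
      exact hyh ▸ hy
    obtain ⟨hGt, hG1⟩ := UEGAux.growth_exists S hS
    obtain ⟨hHt, hH1⟩ := UEGAux.growth_exists T hTgen
    set A := growthRate (S : Set G) with hA
    set B := growthRate (T : Set H) with hB
    have hcB : c ≤ B := by
      rw [hc]
      have : minGrowth ↥H = sInf {x : ℝ | ∃ S : Finset ↥H,
          Subgroup.closure (S : Set ↥H) = ⊤ ∧ growthRate (S : Set ↥H) = x} := rfl
      rw [this]
      exact csInf_le ⟨1, hlbH⟩ ⟨T, hTgen, rfl⟩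
    have hcomp : ∀ n, (ballCard (T : Set H) n : ℝ) ≤ (ballCard (S : Set G) (d * n) : ℝ) := by
      intro n
      have hsub : (fun x : H => (x : G)) '' {x : H | wordLength (T : Set H) x ≤ n} ⊆
          {g : G | wordLength (S : Set G) g ≤ d * n} := by
        rintro _ ⟨a, ha, rfl⟩
        have ha' : wordLength (T : Set H) a ≤ n := ha
        obtain ⟨w, hw, hp, hl⟩ := UEGAux.exists_word hTgen a
        have hcoe : ((a : G)) = (w.map (fun x : H => (x : G))).prod := by
          rw [← hp]
          simp [List.prod_hom w H.subtype]
        show wordLength (S : Set G) (a : G) ≤ d * n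
        rw [hcoe]
        refine le_trans (UEGAux.wordLength_prod_le hS d ?_) ?_
        · intro x hx
          rw [List.mem_map] at hx
          obtain ⟨b, hb, rfl⟩ := hx
          rcases hw b hb with hbT | hbT
          · rw [hTcoe] at hbT
            exact hbT
          · have h5 : wordLength (S : Set G) ((b⁻¹ : H) : G) ≤ d := by
              rw [hTcoe] at hbT; exact hbT
            have h6 : ((b⁻¹ : H) : G) = ((b : G))⁻¹ := rfl
            calc wordLength (S : Set G) (b : G)
                = wordLength (S : Set G) (((b : G))⁻¹)⁻¹ := by rw [inv_inv]
              _ ≤ wordLength (S : Set G) ((b : G))⁻¹ := UEGAux.wordLength_inv_le hS _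
              _ ≤ d := by rw [← h6]; exact h5
        · rw [List.length_map]
          exact Nat.mul_le_mul_left d (by omega)
      have h7 : ballCard (T : Set H) n ≤ ballCard (S : Set G) (d * n) := by
        rw [UEGAux.ballCard_eq, UEGAux.ballCard_eq]
        calc (UEGAux.ball (T : Set H) n).ncard
            = ((fun x : H => (x : G)) '' UEGAux.ball (T : Set H) n).ncard :=
              (Set.ncard_image_of_injective _ Subtype.val_injective).symm
          _ ≤ (UEGAux.ball (S : Set G) (d * n)).ncard :=
              Set.ncard_le_ncard hsub (UEGAux.ball_finite hS hfin _)
      exact_mod_cast h7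
    have htend1 : Tendsto (fun n : ℕ =>
        (ballCard (S : Set G) (d * n) : ℝ) ^ (((d * n : ℕ) : ℝ))⁻¹) atTop (𝓝 A) := by
      apply hGt.comp
      apply Filter.tendsto_atTop_atTop.mpr
      exact fun b => ⟨b, fun a ha => le_trans ha (Nat.le_mul_of_pos_left a (by omega))⟩
    have htend2 : Tendsto (fun n : ℕ =>
        ((ballCard (T : Set H) n : ℝ) ^ ((n : ℝ))⁻¹) ^ ((d : ℝ))⁻¹) atTop
        (𝓝 (B ^ ((d : ℝ))⁻¹)) :=
      hHt.rpow_const (Or.inr (by positivity))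
    have hBA : B ^ ((d : ℝ))⁻¹ ≤ A := by
      apply le_of_tendsto_of_tendsto' htend2 htend1
      intro n
      have hx0 : (0 : ℝ) ≤ (ballCard (T : Set H) n : ℝ) := Nat.cast_nonneg _
      rw [← Real.rpow_mul hx0]
      have hexp : ((n : ℝ))⁻¹ * ((d : ℝ))⁻¹ = (((d * n : ℕ) : ℝ))⁻¹ := by
        push_cast
        rw [mul_inv, mul_comm]
      rw [hexp]
      exact Real.rpow_le_rpow hx0 (hcomp n) (by positivity)
    calc c ^ ((d : ℝ))⁻¹ ≤ B ^ ((d : ℝ))⁻¹ :=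
          Real.rpow_le_rpow (le_of_lt hc0) hcB (by positivity)
      _ ≤ A := hBA
  have hne : {x : ℝ | ∃ S : Finset G, Subgroup.closure (S : Set G) = ⊤ ∧
      growthRate (S : Set G) = x}.Nonempty := by
    obtain ⟨Sset, hcl, hsfin⟩ := Group.fg_iff.mp hG
    refine ⟨growthRate (hsfin.toFinset : Set G), hsfin.toFinset, ?_, rfl⟩
    rw [Set.Finite.coe_toFinset]
    exact hcl
  have hmg : minGrowth G = sInf {x : ℝ | ∃ S : Finset G,
      Subgroup.closure (S : Set G) = ⊤ ∧ growthRate (S : Set G) = x} := rfl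
  have hlow : c ^ ((d : ℝ))⁻¹ ≤ minGrowth G := by
    rw [hmg]
    exact le_csInf hne key
  have h1' : (1 : ℝ) < c ^ ((d : ℝ))⁻¹ := by
    rw [Real.one_lt_rpow_iff_of_pos hc0]
    exact Or.inl ⟨h, by positivity⟩
  linarith
end

section
/- For every n ≥ 2, the natural group homomorphism from Aut(F_n), the automorphism group of the free group F_n of rank n, to GL(n,ℤ), induced by the action of automorphisms on the abelianization F_n/[F_n,F_n] ≅ ℤ^n, is surjective. -/
open FreeGroup Matrix

namespace AutGL


variable {n : ℕ}

/-- exponent-sum homomorphism for generator `i` -/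
noncomputable def eps (i : Fin n) : FreeGroup (Fin n) →* Multiplicative ℤ :=
  FreeGroup.lift (fun k : Fin n => Multiplicative.ofAdd (if k = i then (1 : ℤ) else 0))

@[simp] lemma eps_of (i j : Fin n) :
    eps i (of j) = Multiplicative.ofAdd (if j = i then (1:ℤ) else 0) := by
  simp [eps]

/-- abelianized matrix of an endomorphism -/
noncomputable def mat (f : FreeGroup (Fin n) →* FreeGroup (Fin n)) :
    Matrix (Fin n) (Fin n) ℤ :=
  fun i j => Multiplicative.toAdd (eps i (f (of j)))

lemma eps_comp (f : FreeGroup (Fin n) →* FreeGroup (Fin n)) (i : Fin n)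
    (w : FreeGroup (Fin n)) :
    Multiplicative.toAdd (eps i (f w)) =
      ∑ k, mat f i k * Multiplicative.toAdd (eps k w) := by
  have : (eps i).comp f =
      { toFun := fun w => Multiplicative.ofAdd (∑ k, mat f i k * Multiplicative.toAdd (eps k w)),
        map_one' := by simp
        map_mul' := by
          intro x y
          have h : ∀ k : Fin n, (eps k) (x * y) = eps k x * eps k y := fun k => map_mul _ _ _
          simp only [h, toAdd_mul, mul_add, Finset.sum_add_distrib, ofAdd_add] } := by
    apply FreeGroup.ext_hom
    intro a
    simp [mat, mul_ite, Finset.sum_ite_eq']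
  have := congrArg (fun g => Multiplicative.toAdd (g w)) this
  simpa [mul_comm] using this

lemma mat_mul (f g : FreeGroup (Fin n) →* FreeGroup (Fin n)) :
    mat (f.comp g) = mat f * mat g := by
  ext i j
  simp only [mat, MonoidHom.comp_apply, Matrix.mul_apply]
  rw [eps_comp f i (g (of j))]
  rfl

lemma mat_id : mat (MonoidHom.id (FreeGroup (Fin n))) = 1 := by
  ext i j
  simp [mat, Matrix.one_apply, eq_comm]

/-- the homomorphism `Aut(Fₙ) → GL(n, ℤ)` -/
noncomputable def rho : MulAut (FreeGroup (Fin n)) →* GL (Fin n) ℤ where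
  toFun φ :=
    ⟨mat (φ : FreeGroup (Fin n) →* FreeGroup (Fin n)),
     mat ((φ⁻¹ : MulAut _) : FreeGroup (Fin n) →* FreeGroup (Fin n)),
     by rw [← mat_mul]; rw [show (φ : FreeGroup (Fin n) →* FreeGroup (Fin n)).comp
         ((φ⁻¹ : MulAut _) : FreeGroup (Fin n) →* FreeGroup (Fin n)) = MonoidHom.id _ by
           apply FreeGroup.ext_hom; intro a; simp, mat_id],
     by rw [← mat_mul]; rw [show ((φ⁻¹ : MulAut _) : FreeGroup (Fin n) →* FreeGroup (Fin n)).comp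
         (φ : FreeGroup (Fin n) →* FreeGroup (Fin n)) = MonoidHom.id _ by
           apply FreeGroup.ext_hom; intro a; simp, mat_id]⟩
  map_one' := by
    apply Units.ext
    show mat _ = 1
    rw [show ((1 : MulAut (FreeGroup (Fin n))) : FreeGroup (Fin n) →* FreeGroup (Fin n)) =
      MonoidHom.id _ from rfl, mat_id]
  map_mul' := by
    intro φ ψ
    apply Units.ext
    show mat _ = mat _ * mat _
    rw [← mat_mul]
    rfl

lemma rho_val (φ : MulAut (FreeGroup (Fin n))) :
    ((rho φ : GL (Fin n) ℤ) : Matrix (Fin n) (Fin n) ℤ)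
      = mat (φ : FreeGroup (Fin n) →* FreeGroup (Fin n)) := rfl

/-- membership criterion for the range -/
lemma mem_range_of_val (u : GL (Fin n) ℤ)
    (h : ∃ φ : MulAut (FreeGroup (Fin n)),
      mat (φ : FreeGroup (Fin n) →* FreeGroup (Fin n)) = (u : Matrix (Fin n) (Fin n) ℤ)) :
    u ∈ rho.range := by
  obtain ⟨φ, hφ⟩ := h
  exact ⟨φ, Units.ext hφ⟩


noncomputable def tAutHom (i j : Fin n) (c : ℤ) : FreeGroup (Fin n) →* FreeGroup (Fin n) :=
  FreeGroup.lift (fun k => if k = j then of j * (of i)^c else of k)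

noncomputable def tAut (i j : Fin n) (hij : i ≠ j) (c : ℤ) : MulAut (FreeGroup (Fin n)) :=
  MonoidHom.toMulEquiv (tAutHom i j c) (tAutHom i j (-c))
    (by
      apply FreeGroup.ext_hom; intro a
      by_cases h : a = j
      · subst h
        simp [tAutHom, hij, hij.symm, ← _root_.zpow_add, mul_assoc]
      · simp [tAutHom, h])
    (by
      apply FreeGroup.ext_hom; intro a
      by_cases h : a = j
      · subst h
        simp [tAutHom, hij, hij.symm, ← _root_.zpow_add, mul_assoc]
      · simp [tAutHom, h])

lemma mat_tAut (i j : Fin n) (hij : i ≠ j) (c : ℤ) :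
    mat ((tAut i j hij c : MulAut (FreeGroup (Fin n))) :
      FreeGroup (Fin n) →* FreeGroup (Fin n)) = transvection i j c := by
  ext a b
  have : ((tAut i j hij c : MulAut (FreeGroup (Fin n))) :
      FreeGroup (Fin n) →* FreeGroup (Fin n)) (of b) = tAutHom i j c (of b) := rfl
  rw [mat]
  rw [this]
  by_cases hb : b = j
  · have h1 : tAutHom i j c (of b) = of j * (of i)^c := by simp [tAutHom, hb]
    rw [h1]
    clear this h1
    have e1 : eps a (of j * of i ^ c) = eps a (of j) * (eps a (of i)) ^ c := by
      rw [MonoidHom.map_mul, MonoidHom.map_zpow]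
    rw [e1, hb]
    simp only [eps_of, toAdd_mul, toAdd_zpow, toAdd_ofAdd, transvection,
      Matrix.add_apply, Matrix.one_apply, Matrix.single, smul_eq_mul, Matrix.of_apply]
    by_cases h1 : a = j
    · by_cases h2 : i = a
      · exact absurd (h2.trans h1) hij
      · rw [if_pos h1.symm, if_neg h2, if_pos h1, if_neg (fun hh => h2 hh.1)]; ring
    · rw [if_neg (fun hh => h1 hh.symm), if_neg h1]
      by_cases h2 : i = a
      · rw [if_pos h2, if_pos ⟨h2, trivial⟩]; ring
      · rw [if_neg h2, if_neg (fun hh => h2 hh.1)]; ring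
  · have h1 : tAutHom i j c (of b) = of b := by simp [tAutHom, hb]
    rw [h1]
    clear this h1
    simp only [eps_of, toAdd_ofAdd, transvection, Matrix.add_apply, Matrix.one_apply,
      Matrix.single, smul_eq_mul, Matrix.of_apply]
    rw [if_neg (fun hh : i = a ∧ j = b => hb hh.2.symm)]
    by_cases h : a = b
    · rw [if_pos h.symm, if_pos h]; ring
    · rw [if_neg (fun hh => h hh.symm), if_neg h]; ring

-- diagonal sign automorphism
noncomputable def sAutHom (ε : Fin n → ℤ) : FreeGroup (Fin n) →* FreeGroup (Fin n) :=
  FreeGroup.lift (fun k => of k ^ ε k)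

noncomputable def sAut (ε : Fin n → ℤ) (hε : ∀ k, ε k * ε k = 1) :
    MulAut (FreeGroup (Fin n)) :=
  MonoidHom.toMulEquiv (sAutHom ε) (sAutHom ε)
    (by
      apply FreeGroup.ext_hom; intro a
      simp only [MonoidHom.comp_apply, MonoidHom.id_apply, sAutHom, lift_apply_of, map_zpow]
      rw [← _root_.zpow_mul, hε a, zpow_one])
    (by
      apply FreeGroup.ext_hom; intro a
      simp only [MonoidHom.comp_apply, MonoidHom.id_apply, sAutHom, lift_apply_of, map_zpow]
      rw [← _root_.zpow_mul, hε a, zpow_one])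

lemma mat_sAut (ε : Fin n → ℤ) (hε : ∀ k, ε k * ε k = 1) :
    mat ((sAut ε hε : MulAut (FreeGroup (Fin n))) :
      FreeGroup (Fin n) →* FreeGroup (Fin n)) = diagonal ε := by
  ext a b
  have : ((sAut ε hε : MulAut (FreeGroup (Fin n))) :
      FreeGroup (Fin n) →* FreeGroup (Fin n)) (of b) = of b ^ ε b := by simp [sAut, sAutHom]
  rw [mat, this]
  simp only [map_zpow, eps_of, toAdd_zpow, toAdd_ofAdd, smul_eq_mul, Matrix.diagonal_apply]
  by_cases h : b = a
  · subst h; simp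
  · rw [if_neg h, mul_zero, if_neg (fun hh : a = b => h hh.symm)]

-- permutation automorphism
noncomputable def pAut (σ : Equiv.Perm (Fin n)) : MulAut (FreeGroup (Fin n)) :=
  freeGroupCongr σ

def permMat (σ : Equiv.Perm (Fin n)) : Matrix (Fin n) (Fin n) ℤ :=
  fun a b => if σ b = a then 1 else 0

lemma mat_pAut (σ : Equiv.Perm (Fin n)) :
    mat ((pAut σ : MulAut (FreeGroup (Fin n))) :
      FreeGroup (Fin n) →* FreeGroup (Fin n)) = permMat σ := by
  ext a b
  have : ((pAut σ : MulAut (FreeGroup (Fin n))) :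
      FreeGroup (Fin n) →* FreeGroup (Fin n)) (of b) = of (σ b) := by
    simp [pAut]
  simp [mat, this, permMat]


variable {n : ℕ}

noncomputable def R (n : ℕ) : Subgroup (GL (Fin n) ℤ) := (rho (n := n)).range

noncomputable def tU (i j : Fin n) (hij : i ≠ j) (c : ℤ) : GL (Fin n) ℤ :=
  rho (tAut i j hij c)

lemma tU_val (i j : Fin n) (hij : i ≠ j) (c : ℤ) :
    ((tU i j hij c : GL (Fin n) ℤ) : Matrix (Fin n) (Fin n) ℤ) = transvection i j c := by
  rw [tU, rho_val, mat_tAut]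

lemma tU_mem (i j : Fin n) (hij : i ≠ j) (c : ℤ) : tU i j hij c ∈ R n :=
  ⟨tAut i j hij c, rfl⟩

noncomputable def pU (σ : Equiv.Perm (Fin n)) : GL (Fin n) ℤ := rho (pAut σ)

lemma pU_val (σ : Equiv.Perm (Fin n)) (a b : Fin n) :
    ((pU σ : GL (Fin n) ℤ) : Matrix (Fin n) (Fin n) ℤ) a b = if σ b = a then 1 else 0 := by
  rw [pU, rho_val, mat_pAut]
  rfl

lemma pU_mem (σ : Equiv.Perm (Fin n)) : pU σ ∈ R n := ⟨pAut σ, rfl⟩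

lemma pU_mul_val (σ : Equiv.Perm (Fin n)) (u : GL (Fin n) ℤ) (a b : Fin n) :
    ((pU σ * u : GL (Fin n) ℤ) : Matrix (Fin n) (Fin n) ℤ) a b
      = ((u : GL (Fin n) ℤ) : Matrix (Fin n) (Fin n) ℤ) (σ⁻¹ a) b := by
  have hcoe : ((pU σ * u : GL (Fin n) ℤ) : Matrix (Fin n) (Fin n) ℤ)
      = ((pU σ : GL (Fin n) ℤ) : Matrix (Fin n) (Fin n) ℤ) *
        ((u : GL (Fin n) ℤ) : Matrix (Fin n) (Fin n) ℤ) := Units.val_mul _ _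
  rw [hcoe, Matrix.mul_apply]
  have : ∀ k : Fin n, ((pU σ : GL (Fin n) ℤ) : Matrix (Fin n) (Fin n) ℤ) a k *
      ((u : GL (Fin n) ℤ) : Matrix (Fin n) (Fin n) ℤ) k b
      = if k = σ⁻¹ a then ((u : GL (Fin n) ℤ) : Matrix (Fin n) (Fin n) ℤ) k b else 0 := by
    intro k
    rw [pU_val]
    by_cases h : σ k = a
    · rw [if_pos h, if_pos (by rw [← h]; exact (Equiv.symm_apply_apply σ k).symm), one_mul]
    · rw [if_neg h, if_neg (fun hh => h (by rw [hh]; exact Equiv.apply_symm_apply σ a)), zero_mul]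
  simp only [this, Finset.sum_ite_eq', Finset.mem_univ, if_true]

lemma tU_mul_val_same (i j : Fin n) (hij : i ≠ j) (c : ℤ) (u : GL (Fin n) ℤ) (b : Fin n) :
    ((tU i j hij c * u : GL (Fin n) ℤ) : Matrix (Fin n) (Fin n) ℤ) i b
      = ((u : GL (Fin n) ℤ) : Matrix (Fin n) (Fin n) ℤ) i b
        + c * ((u : GL (Fin n) ℤ) : Matrix (Fin n) (Fin n) ℤ) j b := by
  have h : ((tU i j hij c * u : GL (Fin n) ℤ) : Matrix (Fin n) (Fin n) ℤ)
      = transvection i j c * ((u : GL (Fin n) ℤ) : Matrix (Fin n) (Fin n) ℤ) := by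
    rw [Units.val_mul, tU_val]
  rw [h]
  exact transvection_mul_apply_same (i := i) (j := j) b c _

lemma tU_mul_val_ne (i j : Fin n) (hij : i ≠ j) (c : ℤ) (u : GL (Fin n) ℤ) (a b : Fin n)
    (ha : a ≠ i) :
    ((tU i j hij c * u : GL (Fin n) ℤ) : Matrix (Fin n) (Fin n) ℤ) a b
      = ((u : GL (Fin n) ℤ) : Matrix (Fin n) (Fin n) ℤ) a b := by
  have h : ((tU i j hij c * u : GL (Fin n) ℤ) : Matrix (Fin n) (Fin n) ℤ)
      = transvection i j c * ((u : GL (Fin n) ℤ) : Matrix (Fin n) (Fin n) ℤ) := by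
    rw [Units.val_mul, tU_val]
  rw [h]
  exact transvection_mul_apply_of_ne (i := i) (j := j) a b ha c _

lemma emod_natAbs_lt {a b : ℤ} (hb : b ≠ 0) :
    0 ≤ a % b ∧ a % b < (b.natAbs : ℤ) := by
  refine ⟨Int.emod_nonneg a hb, ?_⟩
  rcases lt_or_gt_of_ne hb with h | h
  · have : a % b = a % (-b) := (Int.emod_neg a b).symm
    rw [this]
    have := Int.emod_lt_of_pos a (by omega : (0:ℤ) < -b)
    omega
  · have := Int.emod_lt_of_pos a h
    omega

/-- clear column `k` below the diagonal -/
lemma clear_below : ∀ (N : ℕ) (k : Fin n) (u : GL (Fin n) ℤ),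
    (∀ j i : Fin n, j < i → j < k →
      ((u : GL (Fin n) ℤ) : Matrix (Fin n) (Fin n) ℤ) i j = 0) →
    (∑ i : Fin n, (if k < i then
      (((u : GL (Fin n) ℤ) : Matrix (Fin n) (Fin n) ℤ) i k).natAbs else 0)) ≤ N →
    ∃ w ∈ R n, ∀ j i : Fin n, j < i → j ≤ k →
      ((w * u : GL (Fin n) ℤ) : Matrix (Fin n) (Fin n) ℤ) i j = 0 := by
  intro N
  induction N with
  | zero =>
    intro k u hprev hsum
    refine ⟨1, one_mem _, ?_⟩
    have hz : ∀ i : Fin n, k < i →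
        ((u : GL (Fin n) ℤ) : Matrix (Fin n) (Fin n) ℤ) i k = 0 := by
      intro i hi
      have := Finset.sum_eq_zero_iff.mp (Nat.le_zero.mp hsum) i (Finset.mem_univ i)
      rw [if_pos hi] at this
      omega
    intro j i hji hjk
    rw [one_mul]
    rcases lt_or_eq_of_le hjk with h | h
    · exact hprev j i hji h
    · subst h; exact hz i hji
  | succ N IH =>
    intro k u hprev hsum
    by_cases hz : ∀ i : Fin n, k < i →
        ((u : GL (Fin n) ℤ) : Matrix (Fin n) (Fin n) ℤ) i k = 0
    · refine ⟨1, one_mem _, ?_⟩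
      intro j i hji hjk
      rw [one_mul]
      rcases lt_or_eq_of_le hjk with h | h
      · exact hprev j i hji h
      · subst h; exact hz i hji
    · push_neg at hz
      obtain ⟨i, hki, hb⟩ := hz
      set M := ((u : GL (Fin n) ℤ) : Matrix (Fin n) (Fin n) ℤ) with hM
      set a := M k k
      set b := M i k
      set q := a / b
      have hki' : k ≠ i := ne_of_lt hki
      set w₁ := tU k i hki' (-q) with hw₁
      set σ := Equiv.swap k i with hσ
      set w₂ := pU σ with hw₂
      set u₂ := w₂ * (w₁ * u) with hu₂
      set M₂ := ((u₂ : GL (Fin n) ℤ) : Matrix (Fin n) (Fin n) ℤ) with hM₂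
      have hσinv : σ⁻¹ = σ := by rw [hσ]; exact Equiv.swap_inv k i
      -- entries of M₂
      have key : ∀ (a' b' : Fin n), M₂ a' b' =
          if a' = k then M i b'
          else if a' = i then M k b' + (-q) * M i b'
          else M a' b' := by
        intro a' b'
        rw [hM₂, hu₂, pU_mul_val, hσinv]
        by_cases h1 : a' = k
        · rw [if_pos h1, h1, hσ, Equiv.swap_apply_left]
          rw [tU_mul_val_ne k i hki' (-q) u i b' (Ne.symm hki')]
        · rw [if_neg h1]
          by_cases h2 : a' = i
          · rw [if_pos h2, h2, hσ, Equiv.swap_apply_right]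
            rw [tU_mul_val_same]
          · rw [if_neg h2, hσ, Equiv.swap_apply_of_ne_of_ne h1 h2]
            rw [tU_mul_val_ne k i hki' (-q) u a' b' h1]
      have hprev₂ : ∀ j i' : Fin n, j < i' → j < k → M₂ i' j = 0 := by
        intro j i' hji' hjk
        rw [key]
        by_cases h1 : i' = k
        · rw [if_pos h1]
          exact hprev j i (lt_trans hjk hki) hjk
        · rw [if_neg h1]
          by_cases h2 : i' = i
          · rw [if_pos h2]
            rw [hprev j k hjk hjk, hprev j i (lt_trans hjk hki) hjk]
            ring
          · rw [if_neg h2]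
            exact hprev j i' hji' hjk
      have hsum₂ : (∑ i' : Fin n, (if k < i' then (M₂ i' k).natAbs else 0)) ≤ N := by
        have hterm : ∀ i' : Fin n, i' ≠ i →
            (if k < i' then (M₂ i' k).natAbs else 0)
              = (if k < i' then (M i' k).natAbs else 0) := by
          intro i' hi'
          by_cases h : k < i'
          · rw [if_pos h, if_pos h, key, if_neg (ne_of_gt h), if_neg hi']
          · rw [if_neg h, if_neg h]
        have hMi : M₂ i k = a % b := by
          rw [key, if_neg (Ne.symm hki'), if_pos rfl]
          rw [Int.emod_def]
          ring
        have hsplit : ∀ (f : Fin n → ℕ), (∑ i' : Fin n, f i') = f i + ∑ i' ∈ Finset.univ.erase i, f i' :=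
          fun f => (Finset.add_sum_erase _ f (Finset.mem_univ i)).symm
        rw [hsplit] at hsum ⊢
        have heq : (∑ i' ∈ Finset.univ.erase i, (if k < i' then (M₂ i' k).natAbs else 0))
            = ∑ i' ∈ Finset.univ.erase i, (if k < i' then (M i' k).natAbs else 0) :=
          Finset.sum_congr rfl (fun i' hi' => hterm i' (Finset.ne_of_mem_erase hi'))
        rw [heq, hMi, if_pos hki] at *
        have h1 := emod_natAbs_lt (a := a) (b := b) hb
        have h2 : (a % b).natAbs < b.natAbs := by omega
        omega
      obtain ⟨w', hw'R, hw'⟩ := IH k u₂ hprev₂ hsum₂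
      refine ⟨w' * w₂ * w₁, mul_mem (mul_mem hw'R (pU_mem σ)) (tU_mem _ _ _ _), ?_⟩
      intro j i' hji' hjk
      have : w' * w₂ * w₁ * u = w' * u₂ := by
        rw [hu₂, mul_assoc, mul_assoc]
      rw [this]
      exact hw' j i' hji' hjk


/-- full forward elimination -/
lemma triangularize : ∀ (m : ℕ) (u : GL (Fin n) ℤ),
    (∀ j i : Fin n, j < i → (j : ℕ) < n - m →
      ((u : GL (Fin n) ℤ) : Matrix (Fin n) (Fin n) ℤ) i j = 0) →
    ∃ w ∈ R n, ∀ j i : Fin n, j < i →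
      ((w * u : GL (Fin n) ℤ) : Matrix (Fin n) (Fin n) ℤ) i j = 0 := by
  intro m
  induction m with
  | zero =>
    intro u h
    exact ⟨1, one_mem _, fun j i hji => by rw [one_mul]; exact h j i hji (by omega)⟩
  | succ m IH =>
    intro u h
    by_cases hm : n - (m + 1) < n
    · set k : Fin n := ⟨n - (m + 1), hm⟩ with hk
      obtain ⟨w₀, hw₀R, hw₀⟩ := clear_below
        (∑ i : Fin n, (if k < i then
          (((u : GL (Fin n) ℤ) : Matrix (Fin n) (Fin n) ℤ) i k).natAbs else 0)) k u
        (fun j i hji hjk => h j i hji (by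
          have : (j : ℕ) < n - (m+1) := hjk
          omega)) le_rfl
      obtain ⟨w', hw'R, hw'⟩ := IH (w₀ * u) (fun j i hji hj => by
        refine hw₀ j i hji ?_
        show (j : ℕ) ≤ n - (m + 1)
        omega)
      refine ⟨w' * w₀, mul_mem hw'R hw₀R, ?_⟩
      intro j i hji
      rw [mul_assoc]
      exact hw' j i hji
    · obtain ⟨w', hw'R, hw'⟩ := IH u (fun j i hji hj => h j i hji (by
        have := j.isLt
        omega))
      exact ⟨w', hw'R, hw'⟩

/-- diagonal entries of a triangular unit are units -/
lemma diag_isUnit (u : GL (Fin n) ℤ)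
    (htri : ∀ j i : Fin n, j < i →
      ((u : GL (Fin n) ℤ) : Matrix (Fin n) (Fin n) ℤ) i j = 0) (i : Fin n) :
    ((u : GL (Fin n) ℤ) : Matrix (Fin n) (Fin n) ℤ) i i = 1 ∨
    ((u : GL (Fin n) ℤ) : Matrix (Fin n) (Fin n) ℤ) i i = -1 := by
  set M := ((u : GL (Fin n) ℤ) : Matrix (Fin n) (Fin n) ℤ) with hM
  have hdet : IsUnit M.det := by
    refine (Matrix.isUnit_iff_isUnit_det M).mp ?_
    exact ⟨u, rfl⟩
  have hblock : M.BlockTriangular id := fun i j hij => htri j i hij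
  rw [Matrix.det_of_upperTriangular hblock] at hdet
  have : IsUnit (M i i) :=
    isUnit_of_dvd_unit (Finset.dvd_prod_of_mem (fun x => M x x) (Finset.mem_univ i)) hdet
  exact Int.isUnit_iff.mp this


noncomputable def sU (ε : Fin n → ℤ) (hε : ∀ k, ε k * ε k = 1) : GL (Fin n) ℤ :=
  rho (sAut ε hε)

lemma sU_val (ε : Fin n → ℤ) (hε : ∀ k, ε k * ε k = 1) :
    ((sU ε hε : GL (Fin n) ℤ) : Matrix (Fin n) (Fin n) ℤ) = Matrix.diagonal ε := by
  rw [sU, rho_val, mat_sAut]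

lemma sU_mem (ε : Fin n → ℤ) (hε : ∀ k, ε k * ε k = 1) : sU ε hε ∈ R n :=
  ⟨sAut ε hε, rfl⟩

/-- clear column `k` above the diagonal, preserving unipotent upper triangular shape -/
lemma clear_above : ∀ (N : ℕ) (k : Fin n) (u : GL (Fin n) ℤ),
    (∀ j i : Fin n, j < i →
      ((u : GL (Fin n) ℤ) : Matrix (Fin n) (Fin n) ℤ) i j = 0) →
    (∀ i : Fin n, ((u : GL (Fin n) ℤ) : Matrix (Fin n) (Fin n) ℤ) i i = 1) →
    (∀ j i : Fin n, j < k → i ≠ j →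
      ((u : GL (Fin n) ℤ) : Matrix (Fin n) (Fin n) ℤ) i j = 0) →
    (∑ i : Fin n, (if i < k then
      (((u : GL (Fin n) ℤ) : Matrix (Fin n) (Fin n) ℤ) i k).natAbs else 0)) ≤ N →
    ∃ w ∈ R n,
      (∀ j i : Fin n, j < i →
        ((w * u : GL (Fin n) ℤ) : Matrix (Fin n) (Fin n) ℤ) i j = 0) ∧
      (∀ i : Fin n, ((w * u : GL (Fin n) ℤ) : Matrix (Fin n) (Fin n) ℤ) i i = 1) ∧
      (∀ j i : Fin n, j ≤ k → i ≠ j →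
        ((w * u : GL (Fin n) ℤ) : Matrix (Fin n) (Fin n) ℤ) i j = 0) := by
  intro N
  induction N with
  | zero =>
    intro k u htri hdiag hprev hsum
    have hz : ∀ i : Fin n, i < k →
        ((u : GL (Fin n) ℤ) : Matrix (Fin n) (Fin n) ℤ) i k = 0 := by
      intro i hi
      have := Finset.sum_eq_zero_iff.mp (Nat.le_zero.mp hsum) i (Finset.mem_univ i)
      rw [if_pos hi] at this
      omega
    refine ⟨1, one_mem _, ?_, ?_, ?_⟩
    · intro j i hji; rw [one_mul]; exact htri j i hji
    · intro i; rw [one_mul]; exact hdiag i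
    · intro j i hjk hij
      rw [one_mul]
      rcases lt_or_eq_of_le hjk with h | h
      · exact hprev j i h hij
      · subst h
        rcases lt_or_gt_of_ne hij with h' | h'
        · exact hz i h'
        · exact htri j i h'
  | succ N IH =>
    intro k u htri hdiag hprev hsum
    by_cases hz : ∀ i : Fin n, i < k →
        ((u : GL (Fin n) ℤ) : Matrix (Fin n) (Fin n) ℤ) i k = 0
    · refine ⟨1, one_mem _, ?_, ?_, ?_⟩
      · intro j i hji; rw [one_mul]; exact htri j i hji
      · intro i; rw [one_mul]; exact hdiag i
      · intro j i hjk hij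
        rw [one_mul]
        rcases lt_or_eq_of_le hjk with h | h
        · exact hprev j i h hij
        · subst h
          rcases lt_or_gt_of_ne hij with h' | h'
          · exact hz i h'
          · exact htri j i h'
    · push_neg at hz
      obtain ⟨i, hik, hc⟩ := hz
      set M := ((u : GL (Fin n) ℤ) : Matrix (Fin n) (Fin n) ℤ) with hM
      set c := M i k with hcdef
      have hik' : i ≠ k := ne_of_lt hik
      set w₁ := tU i k hik' (-c) with hw₁
      set u₂ := w₁ * u with hu₂
      set M₂ := ((u₂ : GL (Fin n) ℤ) : Matrix (Fin n) (Fin n) ℤ) with hM₂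
      have key : ∀ (a' b' : Fin n), M₂ a' b' =
          if a' = i then M i b' + (-c) * M k b' else M a' b' := by
        intro a' b'
        by_cases h1 : a' = i
        · rw [if_pos h1, hM₂, hu₂, h1, tU_mul_val_same]
        · rw [if_neg h1, hM₂, hu₂, tU_mul_val_ne i k hik' (-c) u a' b' h1]
      have htri₂ : ∀ j i' : Fin n, j < i' → M₂ i' j = 0 := by
        intro j i' hji'
        rw [key]
        by_cases h1 : i' = i
        · rw [if_pos h1]
          rw [htri j i (h1 ▸ hji'), htri j k (lt_trans (h1 ▸ hji') hik)]
          ring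
        · rw [if_neg h1]; exact htri j i' hji'
      have hdiag₂ : ∀ i' : Fin n, M₂ i' i' = 1 := by
        intro i'
        rw [key]
        by_cases h1 : i' = i
        · rw [if_pos h1, h1, hdiag i, htri i k hik]
          ring
        · rw [if_neg h1]; exact hdiag i'
      have hprev₂ : ∀ j i' : Fin n, j < k → i' ≠ j → M₂ i' j = 0 := by
        intro j i' hjk hij
        rw [key]
        by_cases h1 : i' = i
        · rw [if_pos h1]
          by_cases h2 : i = j
          · exfalso; exact (h1.trans h2 ▸ hij) rfl
          · rw [hprev j i hjk h2, hprev j k hjk (ne_of_gt hjk)]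
            ring
        · rw [if_neg h1]; exact hprev j i' hjk hij
      have hsum₂ : (∑ i' : Fin n, (if i' < k then (M₂ i' k).natAbs else 0)) ≤ N := by
        have hterm : ∀ i' : Fin n, i' ≠ i →
            (if i' < k then (M₂ i' k).natAbs else 0)
              = (if i' < k then (M i' k).natAbs else 0) := by
          intro i' hi'
          by_cases h : i' < k
          · rw [if_pos h, if_pos h, key, if_neg hi']
          · rw [if_neg h, if_neg h]
        have hMi : M₂ i k = 0 := by
          rw [key, if_pos rfl, hdiag k]
          ring
        have hsplit : ∀ (f : Fin n → ℕ),
            (∑ i' : Fin n, f i') = f i + ∑ i' ∈ Finset.univ.erase i, f i' :=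
          fun f => (Finset.add_sum_erase _ f (Finset.mem_univ i)).symm
        rw [hsplit] at hsum ⊢
        have heq : (∑ i' ∈ Finset.univ.erase i, (if i' < k then (M₂ i' k).natAbs else 0))
            = ∑ i' ∈ Finset.univ.erase i, (if i' < k then (M i' k).natAbs else 0) :=
          Finset.sum_congr rfl (fun i' hi' => hterm i' (Finset.ne_of_mem_erase hi'))
        rw [heq, hMi, if_pos hik] at *
        have : c.natAbs ≠ 0 := fun h => hc (by omega)
        omega
      obtain ⟨w', hw'R, h1, h2, h3⟩ := IH k u₂ htri₂ hdiag₂ hprev₂ hsum₂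
      refine ⟨w' * w₁, mul_mem hw'R (tU_mem _ _ _ _), ?_, ?_, ?_⟩
      · intro j i' hji'
        rw [mul_assoc]
        exact h1 j i' hji'
      · intro i'
        rw [mul_assoc]
        exact h2 i'
      · intro j i' hjk hij
        rw [mul_assoc]
        exact h3 j i' hjk hij

/-- full back substitution -/
lemma back_substitute : ∀ (m : ℕ) (u : GL (Fin n) ℤ),
    (∀ j i : Fin n, j < i →
      ((u : GL (Fin n) ℤ) : Matrix (Fin n) (Fin n) ℤ) i j = 0) →
    (∀ i : Fin n, ((u : GL (Fin n) ℤ) : Matrix (Fin n) (Fin n) ℤ) i i = 1) →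
    (∀ j i : Fin n, (j : ℕ) < n - m → i ≠ j →
      ((u : GL (Fin n) ℤ) : Matrix (Fin n) (Fin n) ℤ) i j = 0) →
    ∃ w ∈ R n, w * u = 1 := by
  intro m
  induction m with
  | zero =>
    intro u htri hdiag hcols
    have : ((u : GL (Fin n) ℤ) : Matrix (Fin n) (Fin n) ℤ) = 1 := by
      ext i j
      by_cases h : i = j
      · rw [h, hdiag j, Matrix.one_apply_eq]
      · rw [hcols j i (by omega) h, Matrix.one_apply_ne h]
    refine ⟨1, one_mem _, ?_⟩
    rw [one_mul]
    exact Units.ext this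
  | succ m IH =>
    intro u htri hdiag hcols
    by_cases hm : n - (m + 1) < n
    · set k : Fin n := ⟨n - (m + 1), hm⟩ with hk
      obtain ⟨w₀, hw₀R, h1, h2, h3⟩ := clear_above
        (∑ i : Fin n, (if i < k then
          (((u : GL (Fin n) ℤ) : Matrix (Fin n) (Fin n) ℤ) i k).natAbs else 0)) k u
        htri hdiag
        (fun j i hjk hij => hcols j i (by
          have : (j : ℕ) < n - (m+1) := hjk
          omega) hij) le_rfl
      obtain ⟨w', hw'R, hw'⟩ := IH (w₀ * u) h1 h2 (fun j i hj hij => by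
        refine h3 j i ?_ hij
        show (j : ℕ) ≤ n - (m + 1)
        omega)
      refine ⟨w' * w₀, mul_mem hw'R hw₀R, ?_⟩
      rw [mul_assoc]
      exact hw'
    · obtain ⟨w', hw'R, hw'⟩ := IH u htri hdiag (fun j i hj hij => hcols j i (by
        have := j.isLt
        omega) hij)
      exact ⟨w', hw'R, hw'⟩

/-- every element of `GL(n, ℤ)` lies in `R n` -/
lemma glnz_mem (u : GL (Fin n) ℤ) : u ∈ R n := by
  obtain ⟨wB, hwBR, hwB⟩ := triangularize n u (fun j i hji hj => by omega)
  set v := wB * u with hv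
  have hdiag := diag_isUnit v hwB
  set ε : Fin n → ℤ := fun i => ((v : GL (Fin n) ℤ) : Matrix (Fin n) (Fin n) ℤ) i i with hε
  have hεsq : ∀ i, ε i * ε i = 1 := by
    intro i
    rcases hdiag i with h | h <;> rw [hε] <;> simp [h]
  set d := sU ε hεsq with hd
  set v' := d * v with hv'
  have hval : ∀ a b : Fin n, ((v' : GL (Fin n) ℤ) : Matrix (Fin n) (Fin n) ℤ) a b
      = ε a * ((v : GL (Fin n) ℤ) : Matrix (Fin n) (Fin n) ℤ) a b := by
    intro a b
    rw [hv', Units.val_mul, sU_val]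
    exact Matrix.diagonal_mul _ _ _ _
  have htri' : ∀ j i : Fin n, j < i →
      ((v' : GL (Fin n) ℤ) : Matrix (Fin n) (Fin n) ℤ) i j = 0 := by
    intro j i hji
    rw [hval, hwB j i hji, mul_zero]
  have hdiag' : ∀ i : Fin n, ((v' : GL (Fin n) ℤ) : Matrix (Fin n) (Fin n) ℤ) i i = 1 := by
    intro i
    rw [hval]
    exact hεsq i
  obtain ⟨wC, hwCR, hwC⟩ := back_substitute n v' htri' hdiag' (fun j i hj hij => by omega)
  have hu : (wC * d * wB) * u = 1 := by
    rw [mul_assoc, ← hv, mul_assoc, ← hv']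
    exact hwC
  have : u = (wC * d * wB)⁻¹ := eq_inv_of_mul_eq_one_right hu
  rw [this]
  exact inv_mem (mul_mem (mul_mem hwCR (sU_mem ε hεsq)) hwBR)

lemma rho_surjective : Function.Surjective (rho (n := n)) := by
  intro u
  exact glnz_mem u

end AutGL

/-- for `n ≥ 2`, the natural homomorphism `Aut(Fₙ) → GL(n,ℤ)` induced by
the action of automorphisms on the abelianization `Fₙ/[Fₙ,Fₙ] ≅ ℤⁿ` is surjective.
The natural homomorphism is characterized by the property that the `(i,j)` entry of the
matrix of `φ` is the exponent sum of the `i`-th generator in the word `φ(xⱼ)`. -/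
theorem aut_freeGroup_to_glnz_surjective (n : ℕ) (hn : 2 ≤ n) :
    ∃ ρ : MulAut (FreeGroup (Fin n)) →* GL (Fin n) ℤ,
      (∀ (φ : MulAut (FreeGroup (Fin n))) (i j : Fin n),
        ((ρ φ : GL (Fin n) ℤ) : Matrix (Fin n) (Fin n) ℤ) i j =
          Multiplicative.toAdd ((FreeGroup.lift
            (fun k : Fin n => Multiplicative.ofAdd (if k = i then (1 : ℤ) else 0)))
            (φ (FreeGroup.of j)))) ∧
      Function.Surjective ρ := by
  refine ⟨AutGL.rho, ?_, AutGL.rho_surjective⟩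
  intro φ i j
  rfl
end
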